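/- For every m ≥ 3, the strong product P_m ⊠ K_2 is a planar closed locally Dirac graph. -/

import Mathlib

/-- The strong product `G ⊠ H`. -/
def strongProd {α β : Type*} (G : SimpleGraph α) (H : SimpleGraph β) :
    SimpleGraph (α × β) where
  Adj a b :=
    (a.1 = b.1 ∧ H.Adj a.2 b.2) ∨ (a.2 = b.2 ∧ G.Adj a.1 b.1) ∨
      (G.Adj a.1 b.1 ∧ H.Adj a.2 b.2)
  symm := ⟨by
    rintro a b (⟨h1, h2⟩ | ⟨h1, h2⟩ | ⟨h1, h2⟩)
    · exact Or.inl ⟨h1.symm, h2.symm⟩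
    · exact Or.inr (Or.inl ⟨h1.symm, h2.symm⟩)
    · exact Or.inr (Or.inr ⟨h1.symm, h2.symm⟩)⟩
  loopless := ⟨by
    rintro a (⟨-, h⟩ | ⟨-, h⟩ | ⟨h, -⟩) <;> exact h.ne rfl⟩

/-- `H` is a minor of `G`, witnessed by disjoint nonempty connected branch sets. -/
def HasMinor {V : Type*} {W : Type*} (G : SimpleGraph V) (H : SimpleGraph W) : Prop :=
  ∃ B : W → Set V,
    (∀ w, (B w).Nonempty) ∧
    (∀ w, (G.induce (B w)).Connected) ∧
    (∀ w₁ w₂, w₁ ≠ w₂ → Disjoint (B w₁) (B w₂)) ∧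
    (∀ w₁ w₂, H.Adj w₁ w₂ → ∃ a ∈ B w₁, ∃ b ∈ B w₂, G.Adj a b)

/-- Planarity, via the Kuratowski–Wagner characterization: a graph is planar iff it has
neither a `K₅` nor a `K₃,₃` minor. -/
def Planar {V : Type*} (G : SimpleGraph V) : Prop :=
  ¬ HasMinor G (SimpleGraph.completeGraph (Fin 5)) ∧
  ¬ HasMinor G (completeBipartiteGraph (Fin 3) (Fin 3))

/-- `G` is closed locally Dirac: for every vertex `v`, the subgraph induced by the closed
neighbourhood `N[v]` satisfies Dirac's condition (every vertex of `⟨N[v]⟩` has degree at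
least `|N[v]|/2` there). -/
def ClosedLocallyDirac {V : Type*} (G : SimpleGraph V) : Prop :=
  ∀ v u : V, u ∈ insert v (G.neighborSet v) →
    (insert v (G.neighborSet v)).ncard ≤
      2 * (G.neighborSet u ∩ insert v (G.neighborSet v)).ncard

set_option linter.unnecessarySeqFocus false

abbrev Gm (m : ℕ) : SimpleGraph (Fin m × Fin 2) :=
  strongProd (SimpleGraph.pathGraph m) (⊤ : SimpleGraph (Fin 2))

lemma adj_iff {m : ℕ} {a b : Fin m × Fin 2} :
    (Gm m).Adj a b ↔ a ≠ b ∧ b.1.val ≤ a.1.val + 1 ∧ a.1.val ≤ b.1.val + 1 := by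
  constructor
  · rintro (⟨h1, h2⟩ | ⟨h1, h2⟩ | ⟨h1, h2⟩)
    · exact ⟨fun h => h2 (congrArg Prod.snd h), by omega, by omega⟩
    · rcases SimpleGraph.pathGraph_adj.mp h2 with h | h
      · exact ⟨fun he => by simp [Prod.ext_iff, Fin.ext_iff] at he; omega, by omega, by omega⟩
      · exact ⟨fun he => by simp [Prod.ext_iff, Fin.ext_iff] at he; omega, by omega, by omega⟩
    · rcases SimpleGraph.pathGraph_adj.mp h1 with h | h
      · exact ⟨fun he => by simp [Prod.ext_iff, Fin.ext_iff] at he; omega, by omega, by omega⟩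
      · exact ⟨fun he => by simp [Prod.ext_iff, Fin.ext_iff] at he; omega, by omega, by omega⟩
  · rintro ⟨hne, h1, h2⟩
    by_cases hc : a.1 = b.1
    · refine Or.inl ⟨hc, fun h2 => hne ?_⟩
      exact Prod.ext hc h2
    · have hp : (SimpleGraph.pathGraph m).Adj a.1 b.1 := by
        rw [SimpleGraph.pathGraph_adj]
        have : a.1.val ≠ b.1.val := fun h => hc (Fin.ext h)
        omega
      by_cases hs : a.2 = b.2
      · exact Or.inr (Or.inl ⟨hs, hp⟩)
      · exact Or.inr (Or.inr ⟨hp, hs⟩)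

lemma adj_col {m : ℕ} {a b : Fin m × Fin 2} (h : (Gm m).Adj a b) :
    b.1.val ≤ a.1.val + 1 ∧ a.1.val ≤ b.1.val + 1 := (adj_iff.mp h).2

lemma walk_ivt {m : ℕ} {B : Set (Fin m × Fin 2)} {a b : ↥B}
    (p : ((Gm m).induce B).Walk a b) :
    ∀ k : ℕ, (a : Fin m × Fin 2).1.val ≤ k → k ≤ (b : Fin m × Fin 2).1.val →
      ∃ v ∈ B, v.1.val = k := by
  induction p with
  | @nil u =>
    intro k h1 h2
    exact ⟨u, u.2, le_antisymm h1 h2⟩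
  | @cons u c w h q ih =>
    intro k h1 h2
    rcases eq_or_lt_of_le h1 with he | hlt
    · exact ⟨u, u.2, he⟩
    · have hadj : (Gm m).Adj u c := h
      have := adj_col hadj
      exact ih k (by omega) h2

lemma conn_col {m : ℕ} {B : Set (Fin m × Fin 2)} (hc : ((Gm m).induce B).Connected)
    {x y : Fin m × Fin 2} (hx : x ∈ B) (hy : y ∈ B) {k : ℕ}
    (h1 : x.1.val ≤ k) (h2 : k ≤ y.1.val) : ∃ v ∈ B, v.1.val = k := by
  obtain ⟨p⟩ := hc.preconnected ⟨x, hx⟩ ⟨y, hy⟩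
  exact walk_ivt p k h1 h2

/-- If a connected set has a vertex in column `≤ c` and a vertex in column `≥ c - 1`,
then it has a vertex in column `c - 1` or `c`. -/
lemma near_col {m : ℕ} {B : Set (Fin m × Fin 2)} (hc : ((Gm m).induce B).Connected)
    {c : ℕ} (hlo : ∃ v ∈ B, v.1.val ≤ c) (hhi : ∃ v ∈ B, c - 1 ≤ v.1.val) :
    ∃ v ∈ B, v.1.val = c - 1 ∨ v.1.val = c := by
  obtain ⟨x, hx, hxc⟩ := hlo
  obtain ⟨y, hy, hyc⟩ := hhi
  by_cases h : y.1.val ≤ c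
  · exact ⟨y, hy, by omega⟩
  · obtain ⟨v, hv, hvc⟩ := conn_col hc hx hy hxc (by omega)
    exact ⟨v, hv, Or.inr hvc⟩

/-- Key injectivity: two vertices with columns in `{c-1, c}`, same "column indicator"
and same row, are equal. -/
lemma fkey {m c : ℕ} {v w : Fin m × Fin 2}
    (hv : v.1.val = c - 1 ∨ v.1.val = c) (hw : w.1.val = c - 1 ∨ w.1.val = c)
    (h1 : (decide (v.1.val = c)) = (decide (w.1.val = c))) (h2 : v.2 = w.2) : v = w := by
  rw [decide_eq_decide] at h1
  have : v.1.val = w.1.val := by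
    rcases hv with h | h <;> rcases hw with h' | h'
    · omega
    · have := h1.mpr h'; omega
    · have := h1.mp h; omega
    · omega
  exact Prod.ext (Fin.ext this) h2

lemma pigeon5 {m c : ℕ} (v : Fin 5 → Fin m × Fin 2)
    (hcol : ∀ j, (v j).1.val = c - 1 ∨ (v j).1.val = c)
    (hinj : Function.Injective v) : False := by
  have hg : Function.Injective (fun j => ((decide ((v j).1.val = c)), (v j).2)) := by
    intro j j' h
    simp only [Prod.mk.injEq] at h
    exact hinj (fkey (hcol j) (hcol j') h.1 h.2)
  have := Fintype.card_le_of_injective _ hg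
  simp at this

lemma no_K5 (m : ℕ) : ¬ HasMinor (Gm m) (SimpleGraph.completeGraph (Fin 5)) := by
  rintro ⟨B, hne, hconn, hdisj, hadj⟩
  have hLmem : ∀ w, ∃ v ∈ B w, v.1.val = sInf {i : ℕ | ∃ u ∈ B w, u.1.val = i} := by
    intro w
    obtain ⟨v, hv⟩ := hne w
    have hnon : {i : ℕ | ∃ u ∈ B w, u.1.val = i}.Nonempty := ⟨v.1.val, v, hv, rfl⟩
    obtain ⟨u, hu, huc⟩ := Nat.sInf_mem hnon
    exact ⟨u, hu, huc⟩
  set L : Fin 5 → ℕ := fun w => sInf {i : ℕ | ∃ u ∈ B w, u.1.val = i} with hL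
  have hLle : ∀ w, ∀ v ∈ B w, L w ≤ v.1.val := fun w v hv => Nat.sInf_le ⟨v, hv, rfl⟩
  obtain ⟨w0, hw0⟩ := Finite.exists_max L
  have key : ∀ w, ∃ v ∈ B w, v.1.val = L w0 - 1 ∨ v.1.val = L w0 := by
    intro w
    by_cases hw : w = w0
    · subst hw; obtain ⟨v, hv, hvc⟩ := hLmem w; exact ⟨v, hv, Or.inr hvc⟩
    · obtain ⟨a, ha, b, hb, hab⟩ := hadj w w0 hw
      have hbc : L w0 ≤ b.1.val := hLle w0 b hb
      have hac : L w0 - 1 ≤ a.1.val := by have := adj_col hab; omega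
      obtain ⟨p, hp, hpc⟩ := hLmem w
      exact near_col (hconn w) ⟨p, hp, by rw [hpc]; exact hw0 w⟩ ⟨a, ha, hac⟩
  choose v hv hvc using key
  have hinj : Function.Injective v := by
    intro j j' h
    by_contra hne'
    exact (Set.disjoint_left.mp (hdisj j j' hne') (hv j)) (h ▸ hv j')
  exact pigeon5 v hvc hinj

lemma ne_of_disj {α : Type*} {s t : Set α} {a b : α} (hd : Disjoint s t)
    (ha : a ∈ s) (hb : b ∈ t) : a ≠ b :=
  fun he => Set.disjoint_left.mp hd ha (he ▸ hb)

lemma inj5 {α : Type*} {a b c d e : α} (h1 : a ≠ b) (h2 : a ≠ c) (h3 : a ≠ d) (h4 : a ≠ e)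
    (h5 : b ≠ c) (h6 : b ≠ d) (h7 : b ≠ e) (h8 : c ≠ d) (h9 : c ≠ e) (h10 : d ≠ e) :
    Function.Injective ![a, b, c, d, e] := by
  intro i j h
  fin_cases i <;> fin_cases j <;> simp_all

lemma k33_aux (m : ℕ) (X0 X1 : Set (Fin m × Fin 2)) (Y : Fin 3 → Set (Fin m × Fin 2)) (c : ℕ)
    (hconnX1 : ((Gm m).induce X1).Connected)
    (hconnY : ∀ j, ((Gm m).induce (Y j)).Connected)
    (hd01 : Disjoint X0 X1)
    (hdX0Y : ∀ j, Disjoint X0 (Y j))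
    (hdX1Y : ∀ j, Disjoint X1 (Y j))
    (hdYY : ∀ j k, j ≠ k → Disjoint (Y j) (Y k))
    (hadj0 : ∀ j, ∃ a ∈ X0, ∃ b ∈ Y j, (Gm m).Adj a b)
    (hadj1 : ∀ j, ∃ a ∈ X1, ∃ b ∈ Y j, (Gm m).Adj a b)
    (hx0 : ∃ v ∈ X0, v.1.val = c)
    (hx0' : ∀ v ∈ X0, c ≤ v.1.val)
    (hX1le : ∃ v ∈ X1, v.1.val ≤ c)
    (hYle : ∀ j, ∃ v ∈ Y j, v.1.val ≤ c) : False := by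
  -- Step A: each `Y j` has a vertex with column in `{c-1, c}`
  have keyY : ∀ j, ∃ v ∈ Y j, v.1.val = c - 1 ∨ v.1.val = c := by
    intro j
    obtain ⟨a, ha, b, hb, hab⟩ := hadj0 j
    have hac : c ≤ a.1.val := hx0' a ha
    have hbc : c - 1 ≤ b.1.val := by have := adj_col hab; omega
    exact near_col (hconnY j) (hYle j) ⟨b, hb, hbc⟩
  choose u hu huc using keyY
  obtain ⟨x0, hx0m, hx0c⟩ := hx0
  -- Step B: `X1` has no vertex with column in `{c-1, c}`
  have hX1avoid : ∀ v ∈ X1, ¬(v.1.val = c - 1 ∨ v.1.val = c) := by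
    rintro v hvm hvc
    refine pigeon5 (c := c) ![x0, v, u 0, u 1, u 2] ?_ ?_
    · intro j; fin_cases j <;>
        simp only [Matrix.cons_val_zero, Matrix.cons_val_one, Matrix.head_cons,
          Matrix.cons_val_two, Matrix.tail_cons, Matrix.cons_val_three, Matrix.cons_val_four]
      · exact Or.inr hx0c
      · exact hvc
      · exact huc 0
      · exact huc 1
      · exact huc 2
    · exact inj5 (ne_of_disj hd01 hx0m hvm)
        (ne_of_disj (hdX0Y 0) hx0m (hu 0)) (ne_of_disj (hdX0Y 1) hx0m (hu 1))
        (ne_of_disj (hdX0Y 2) hx0m (hu 2))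
        (ne_of_disj (hdX1Y 0) hvm (hu 0)) (ne_of_disj (hdX1Y 1) hvm (hu 1))
        (ne_of_disj (hdX1Y 2) hvm (hu 2))
        (ne_of_disj (hdYY 0 1 (by decide)) (hu 0) (hu 1))
        (ne_of_disj (hdYY 0 2 (by decide)) (hu 0) (hu 2))
        (ne_of_disj (hdYY 1 2 (by decide)) (hu 1) (hu 2))
  -- Step C: all of `X1` lies in columns `≤ c - 2`
  obtain ⟨q, hq, hqc⟩ := hX1le
  have hq2 : q.1.val ≤ c - 2 ∧ 2 ≤ c := by
    have := hX1avoid q hq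
    push_neg at this
    omega
  have hX1bound : ∀ v ∈ X1, v.1.val ≤ c - 2 := by
    intro v hv
    by_contra hlt
    obtain ⟨w, hw, hwc⟩ := conn_col hconnX1 hq hv (k := c - 1) (by omega) (by omega)
    exact hX1avoid w hw (Or.inl hwc)
  -- Step D: each `Y j` has a vertex in column `c - 1`
  have keyY2 : ∀ j, ∃ v ∈ Y j, v.1.val = c - 1 := by
    intro j
    obtain ⟨a, ha, b, hb, hab⟩ := hadj1 j
    have haa : a.1.val ≤ c - 2 := hX1bound a ha
    have hb1 : b.1.val ≤ c - 1 := by have := adj_col hab; omega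
    have hu1 : c - 1 ≤ (u j).1.val := by rcases huc j with h | h <;> omega
    exact conn_col (hconnY j) hb (hu j) hb1 hu1
  choose z hz hzc using keyY2
  -- Step E: three disjoint sets meeting a two-element column
  have hzinj : Function.Injective (fun j => (z j).2) := by
    intro j j' h
    by_contra hne
    have he : z j = z j' := Prod.ext (Fin.ext (by rw [hzc j, hzc j'])) h
    exact Set.disjoint_left.mp (hdYY j j' hne) (hz j) (he ▸ hz j')
  have := Fintype.card_le_of_injective _ hzinj
  simp at this

lemma no_K33 (m : ℕ) : ¬ HasMinor (Gm m) (completeBipartiteGraph (Fin 3) (Fin 3)) := by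
  rintro ⟨B, hne, hconn, hdisj, hadj⟩
  have hLmem : ∀ w, ∃ v ∈ B w, v.1.val = sInf {i : ℕ | ∃ u ∈ B w, u.1.val = i} := by
    intro w
    obtain ⟨v, hv⟩ := hne w
    have hnon : {i : ℕ | ∃ u ∈ B w, u.1.val = i}.Nonempty := ⟨v.1.val, v, hv, rfl⟩
    obtain ⟨u, hu, huc⟩ := Nat.sInf_mem hnon
    exact ⟨u, hu, huc⟩
  set L : Fin 3 ⊕ Fin 3 → ℕ := fun w => sInf {i : ℕ | ∃ u ∈ B w, u.1.val = i} with hL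
  have hLle : ∀ w, ∀ v ∈ B w, L w ≤ v.1.val := fun w v hv => Nat.sInf_le ⟨v, hv, rfl⟩
  obtain ⟨w0, hw0⟩ := Finite.exists_max L
  have hle : ∀ w, ∃ v ∈ B w, v.1.val ≤ L w0 := by
    intro w
    obtain ⟨v, hv, hvc⟩ := hLmem w
    exact ⟨v, hv, by rw [hvc]; exact hw0 w⟩
  rcases w0 with i0 | i0
  · have hne1 : (Sum.inl (i0 + 1) : Fin 3 ⊕ Fin 3) ≠ Sum.inl i0 := by
      simp [Fin.ext_iff, Fin.val_add]
    exact k33_aux m (B (Sum.inl i0)) (B (Sum.inl (i0 + 1))) (fun j => B (Sum.inr j)) (L (Sum.inl i0))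
      (hconn _) (fun j => hconn _)
      (hdisj _ _ hne1.symm)
      (fun j => hdisj _ _ (by simp))
      (fun j => hdisj _ _ (by simp))
      (fun j k hjk => hdisj _ _ (by simp [hjk]))
      (fun j => hadj _ _ (by simp))
      (fun j => hadj _ _ (by simp))
      (hLmem _) (hLle _) (hle _) (fun j => hle _)
  · have hne1 : (Sum.inr (i0 + 1) : Fin 3 ⊕ Fin 3) ≠ Sum.inr i0 := by
      simp [Fin.ext_iff, Fin.val_add]
    exact k33_aux m (B (Sum.inr i0)) (B (Sum.inr (i0 + 1))) (fun j => B (Sum.inl j)) (L (Sum.inr i0))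
      (hconn _) (fun j => hconn _)
      (hdisj _ _ hne1.symm)
      (fun j => hdisj _ _ (by simp))
      (fun j => hdisj _ _ (by simp))
      (fun j k hjk => hdisj _ _ (by simp [hjk]))
      (fun j => hadj _ _ (by simp))
      (fun j => hadj _ _ (by simp))
      (hLmem _) (hLle _) (hle _) (fun j => hle _)

lemma nbhd_eq {m : ℕ} (v : Fin m × Fin 2) :
    insert v ((Gm m).neighborSet v) =
      {u : Fin m × Fin 2 | u.1.val ≤ v.1.val + 1 ∧ v.1.val ≤ u.1.val + 1} := by
  ext u
  simp only [Set.mem_insert_iff, SimpleGraph.mem_neighborSet, Set.mem_setOf_eq]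
  constructor
  · rintro (rfl | h)
    · omega
    · have := (adj_iff.mp h).2; omega
  · intro h
    by_cases he : u = v
    · exact Or.inl he
    · exact Or.inr (adj_iff.mpr ⟨fun hh => he hh.symm, by omega, by omega⟩)

lemma two_le_ncard {α : Type*} [Finite α] {s : Set α} {a b : α}
    (ha : a ∈ s) (hb : b ∈ s) (hab : a ≠ b) : 2 ≤ s.ncard := by
  have h1 : ({a, b} : Set α).ncard ≤ s.ncard :=
    Set.ncard_le_ncard (Set.insert_subset ha (Set.singleton_subset_iff.mpr hb)) (Set.toFinite s)
  rwa [Set.ncard_pair hab] at h1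

lemma three_le_ncard {α : Type*} [Finite α] {s : Set α} {a b c : α}
    (ha : a ∈ s) (hb : b ∈ s) (hc : c ∈ s)
    (hab : a ≠ b) (hac : a ≠ c) (hbc : b ≠ c) : 3 ≤ s.ncard := by
  have h1 : ({a, b, c} : Set α).ncard ≤ s.ncard :=
    Set.ncard_le_ncard (Set.insert_subset ha (Set.insert_subset hb
      (Set.singleton_subset_iff.mpr hc))) (Set.toFinite s)
  rwa [Set.ncard_insert_of_notMem (by simp [hab, hac]), Set.ncard_pair hbc] at h1

lemma ncard_le_four {α : Type*} {a b c d : α} {s : Set α}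
    (h : s ⊆ {a, b, c, d}) : s.ncard ≤ 4 := by
  refine (Set.ncard_le_ncard h (Set.toFinite _)).trans ?_
  have h1 := Set.ncard_insert_le a ({b, c, d} : Set α)
  have h2 := Set.ncard_insert_le b ({c, d} : Set α)
  have h3 := Set.ncard_insert_le c ({d} : Set α)
  have h4 : ({d} : Set α).ncard = 1 := Set.ncard_singleton d
  omega

lemma ncard_le_six {α : Type*} {a b c d e f : α} {s : Set α}
    (h : s ⊆ {a, b, c, d, e, f}) : s.ncard ≤ 6 := by
  refine (Set.ncard_le_ncard h (Set.toFinite _)).trans ?_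
  have h1 := Set.ncard_insert_le a ({b, c, d, e, f} : Set α)
  have h2 := Set.ncard_insert_le b ({c, d, e, f} : Set α)
  have h3 := Set.ncard_insert_le c ({d, e, f} : Set α)
  have h4 := Set.ncard_insert_le d ({e, f} : Set α)
  have h5 := Set.ncard_insert_le e ({f} : Set α)
  have h6 : ({f} : Set α).ncard = 1 := Set.ncard_singleton f
  omega

lemma ne_of_col {m : ℕ} {a b : Fin m × Fin 2} (h : a.1.val ≠ b.1.val) : a ≠ b :=
  fun he => h (by rw [he])

lemma dirac (m : ℕ) (hm : 3 ≤ m) :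
    ∀ v u : Fin m × Fin 2, u ∈ insert v ((Gm m).neighborSet v) →
      (insert v ((Gm m).neighborSet v)).ncard ≤
        2 * (((Gm m).neighborSet u) ∩ insert v ((Gm m).neighborSet v)).ncard := by
  intro v u hu
  rw [nbhd_eq] at hu ⊢
  obtain ⟨hu1, hu2⟩ := hu
  have hi : v.1.val < m := v.1.isLt
  have hj : u.1.val < m := u.1.isLt
  have hs : u.2.val < 2 := u.2.isLt
  have hflip : u.2 + 1 ≠ u.2 := by
    simp only [ne_eq, Fin.ext_iff, Fin.val_add]
    omega
  by_cases hint : 1 ≤ v.1.val ∧ v.1.val ≤ m - 2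
  · -- interior case
    set k : ℕ := if u.1.val = v.1.val then v.1.val - 1 else v.1.val with hk
    have hkm : k < m := by rw [hk]; split <;> omega
    have hkj : k ≠ u.1.val := by rw [hk]; split <;> omega
    have hkj1 : k ≤ u.1.val + 1 ∧ u.1.val ≤ k + 1 := by rw [hk]; split <;> omega
    have hki1 : k ≤ v.1.val + 1 ∧ v.1.val ≤ k + 1 := by rw [hk]; split <;> omega
    have hmem : ∀ r : Fin 2, ((⟨k, hkm⟩ : Fin m), r) ∈
        ((Gm m).neighborSet u) ∩
          {w : Fin m × Fin 2 | w.1.val ≤ v.1.val + 1 ∧ v.1.val ≤ w.1.val + 1} := by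
      intro r
      refine ⟨adj_iff.mpr ⟨ne_of_col (by simpa using hkj.symm), ?_, ?_⟩, ?_, ?_⟩ <;>
        simp <;> omega
    have hmem3 : (u.1, u.2 + 1) ∈
        ((Gm m).neighborSet u) ∩
          {w : Fin m × Fin 2 | w.1.val ≤ v.1.val + 1 ∧ v.1.val ≤ w.1.val + 1} := by
      refine ⟨adj_iff.mpr ⟨?_, Nat.le_succ _, Nat.le_succ _⟩, by simpa using hu1,
        by simpa using hu2⟩
      intro he
      exact hflip (congrArg Prod.snd he).symm
    have h3 : 3 ≤ (((Gm m).neighborSet u) ∩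
        {w : Fin m × Fin 2 | w.1.val ≤ v.1.val + 1 ∧ v.1.val ≤ w.1.val + 1}).ncard := by
      refine three_le_ncard (hmem 0) (hmem 1) hmem3 ?_ ?_ ?_
      · simp [Prod.ext_iff]
      · exact ne_of_col (by simpa using hkj)
      · exact ne_of_col (by simpa using hkj)
    have h6 : ({w : Fin m × Fin 2 | w.1.val ≤ v.1.val + 1 ∧ v.1.val ≤ w.1.val + 1}).ncard ≤ 6 := by
      refine ncard_le_six (a := ((⟨v.1.val - 1, by omega⟩ : Fin m), 0))
        (b := ((⟨v.1.val - 1, by omega⟩ : Fin m), 1))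
        (c := ((⟨v.1.val, by omega⟩ : Fin m), 0)) (d := ((⟨v.1.val, by omega⟩ : Fin m), 1))
        (e := ((⟨v.1.val + 1, by omega⟩ : Fin m), 0))
        (f := ((⟨v.1.val + 1, by omega⟩ : Fin m), 1)) ?_
      intro w hw
      obtain ⟨hw1, hw2⟩ := hw
      have hws : w.2.val < 2 := w.2.isLt
      simp only [Set.mem_insert_iff, Set.mem_singleton_iff, Prod.ext_iff, Fin.ext_iff, Fin.val_zero, Fin.val_one]
      omega
    omega
  · -- boundary case: v.1.val = 0 or v.1.val = m - 1
    set k : ℕ := if u.1.val = v.1.val then (if v.1.val = 0 then 1 else m - 2)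
      else v.1.val with hk
    have hkm : k < m := by rw [hk]; split <;> [skip; omega] <;> split <;> omega
    have hkj : k ≠ u.1.val := by rw [hk]; split <;> [skip; omega] <;> split <;> omega
    have hkj1 : k ≤ u.1.val + 1 ∧ u.1.val ≤ k + 1 := by
      rw [hk]; split <;> [skip; omega] <;> split <;> omega
    have hki1 : k ≤ v.1.val + 1 ∧ v.1.val ≤ k + 1 := by
      rw [hk]; split <;> [skip; omega] <;> split <;> omega
    have hmem : ∀ r : Fin 2, ((⟨k, hkm⟩ : Fin m), r) ∈
        ((Gm m).neighborSet u) ∩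
          {w : Fin m × Fin 2 | w.1.val ≤ v.1.val + 1 ∧ v.1.val ≤ w.1.val + 1} := by
      intro r
      refine ⟨adj_iff.mpr ⟨ne_of_col (by simpa using hkj.symm), ?_, ?_⟩, ?_, ?_⟩ <;>
        simp <;> omega
    have h2 : 2 ≤ (((Gm m).neighborSet u) ∩
        {w : Fin m × Fin 2 | w.1.val ≤ v.1.val + 1 ∧ v.1.val ≤ w.1.val + 1}).ncard := by
      refine two_le_ncard (hmem 0) (hmem 1) ?_
      simp [Prod.ext_iff]
    have h4 : ({w : Fin m × Fin 2 | w.1.val ≤ v.1.val + 1 ∧ v.1.val ≤ w.1.val + 1}).ncard ≤ 4 := by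
      have hvb : v.1.val = 0 ∨ v.1.val = m - 1 := by omega
      refine ncard_le_four (a := ((⟨min v.1.val (m - 2), by omega⟩ : Fin m), 0))
        (b := ((⟨min v.1.val (m - 2), by omega⟩ : Fin m), 1))
        (c := ((⟨min (v.1.val + 1) (m - 1), by omega⟩ : Fin m), 0))
        (d := ((⟨min (v.1.val + 1) (m - 1), by omega⟩ : Fin m), 1)) ?_
      intro w hw
      obtain ⟨hw1, hw2⟩ := hw
      have hws : w.2.val < 2 := w.2.isLt
      simp only [Set.mem_insert_iff, Set.mem_singleton_iff, Prod.ext_iff, Fin.ext_iff, Fin.val_zero, Fin.val_one]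
      omega
    omega

/-- For every `m ≥ 3`, the strong product `P_m ⊠ K₂` is a planar closed locally Dirac graph. -/
theorem stmt19 (m : ℕ) (hm : 3 ≤ m) :
    Planar (strongProd (SimpleGraph.pathGraph m) (⊤ : SimpleGraph (Fin 2))) ∧
    ClosedLocallyDirac (strongProd (SimpleGraph.pathGraph m) (⊤ : SimpleGraph (Fin 2))) := by
  exact ⟨⟨no_K5 m, no_K33 m⟩, dirac m hm⟩
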